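/- Let K ⊆ M ⊆ L be a tower of difference fields with M transformally algebraic over K. Then L is almost transformally separable over K if and only if M is almost transformally separable over K and L is almost transformally separable over M. -/

import Mathlib

set_option maxHeartbeats 1000000

/-! STATEMENT 11: transitivity of almost transformal separability in towers whose
bottom extension is transformally algebraic. -/

/-- A family `b` is algebraically independent over the subfield `A`. -/
def AlgIndepOver {Ω : Type*} [Field Ω] (A : Subfield Ω) {ι : Type*} (b : ι → Ω) : Prop :=
  ∀ P : MvPolynomial ι Ω, (∀ m, MvPolynomial.coeff m P ∈ A) →
    MvPolynomial.eval b P = 0 → P = 0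

namespace S11
open MvPolynomial Set

variable {Ω : Type*} [Field Ω]

def adj (F : Subfield Ω) (s : Set Ω) : Subfield Ω := Subfield.closure (↑F ∪ s)

lemma le_adj (F : Subfield Ω) (s : Set Ω) : F ≤ adj F s :=
  fun x hx => Subfield.subset_closure (Or.inl hx)

lemma subset_adj (F : Subfield Ω) (s : Set Ω) : s ⊆ ↑(adj F s) :=
  fun x hx => Subfield.subset_closure (Or.inr hx)

lemma mem_adj_of_mem (F : Subfield Ω) {s : Set Ω} {x : Ω} (h : x ∈ s) : x ∈ adj F s :=
  subset_adj F s h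

lemma adj_le {F G : Subfield Ω} {s : Set Ω} (h1 : F ≤ G) (h2 : s ⊆ ↑G) : adj F s ≤ G :=
  Subfield.closure_le.2 (Set.union_subset h1 h2)

lemma adj_mono {F G : Subfield Ω} {s t : Set Ω} (h1 : F ≤ G) (h2 : s ⊆ t) :
    adj F s ≤ adj G t :=
  adj_le (le_trans h1 (le_adj _ _)) (fun x hx => subset_adj G t (h2 hx))

lemma adj_of_subset {F : Subfield Ω} {s : Set Ω} (h : s ⊆ ↑F) : adj F s = F :=
  le_antisymm (adj_le le_rfl h) (le_adj _ _)

lemma adj_adj (F : Subfield Ω) (s t : Set Ω) : adj (adj F s) t = adj F (s ∪ t) := by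
  unfold adj
  apply le_antisymm
  · rw [Subfield.closure_le]
    rintro x (hx | hx)
    · refine Subfield.closure_mono ?_ hx
      rintro y (hy | hy)
      exacts [Or.inl hy, Or.inr (Or.inl hy)]
    · exact Subfield.subset_closure (Or.inr (Or.inr hx))
  · rw [Subfield.closure_le]
    rintro x (hx | hx | hx)
    · exact Subfield.subset_closure (Or.inl (Subfield.subset_closure (Or.inl hx)))
    · exact Subfield.subset_closure (Or.inl (Subfield.subset_closure (Or.inr hx)))
    · exact Subfield.subset_closure (Or.inr hx)

lemma adj_comm (F : Subfield Ω) (s t : Set Ω) : adj (adj F s) t = adj (adj F t) s := by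
  rw [adj_adj, adj_adj, Set.union_comm]

lemma adj_absorb {F : Subfield Ω} {s t : Set Ω} (h : s ⊆ ↑F) : adj F (s ∪ t) = adj F t := by
  rw [← adj_adj, adj_of_subset h]

def AlgOver (F : Subfield Ω) (x : Ω) : Prop :=
  ∃ p : Polynomial Ω, p ≠ 0 ∧ (∀ i, p.coeff i ∈ F) ∧ Polynomial.eval x p = 0

lemma AlgOver.mono {F G : Subfield Ω} (h : F ≤ G) {x : Ω} (hx : AlgOver F x) : AlgOver G x := by
  obtain ⟨p, h1, h2, h3⟩ := hx
  exact ⟨p, h1, fun i => h (h2 i), h3⟩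

lemma algOver_of_mem {F : Subfield Ω} {x : Ω} (hx : x ∈ F) : AlgOver F x := by
  refine ⟨Polynomial.X - Polynomial.C x, ?_, ?_, by simp⟩
  · intro h
    have := congrArg (Polynomial.coeff · 1) h
    simp [Polynomial.coeff_X_one] at this
  · intro i
    rw [Polynomial.coeff_sub]
    rcases eq_or_ne i 1 with rfl | h1
    · simpa using F.one_mem
    rcases eq_or_ne i 0 with rfl | h0
    · simpa using F.neg_mem hx
    · simp only [Polynomial.coeff_X, Ne.symm h1, if_false, Polynomial.coeff_C, h0, if_false]
      simpa using F.zero_mem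

lemma algOver_iff_isAlgebraic (F : Subfield Ω) (x : Ω) :
    AlgOver F x ↔ IsAlgebraic F x := by
  constructor
  · rintro ⟨p, hp0, hpc, hpe⟩
    classical
    set q : Polynomial ↥F :=
      ∑ i ∈ p.support.attach, Polynomial.monomial i.1 (⟨p.coeff i.1, hpc i.1⟩ : ↥F) with hq
    have hmap : q.map (algebraMap ↥F Ω) = p := by
      rw [hq, Polynomial.map_sum]
      simp only [Polynomial.map_monomial]
      have : ∀ i ∈ p.support.attach,
          Polynomial.monomial i.1 (algebraMap ↥F Ω ⟨p.coeff i.1, hpc i.1⟩)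
          = Polynomial.monomial i.1 (p.coeff i.1) := fun i _ => rfl
      rw [Finset.sum_congr rfl this,
        Finset.sum_attach p.support (fun i => Polynomial.monomial i (p.coeff i))]
      exact (Polynomial.as_sum_support p).symm
    refine ⟨q, ?_, ?_⟩
    · intro h; rw [h] at hmap; simp only [Polynomial.map_zero] at hmap; exact hp0 hmap.symm
    · rw [Polynomial.aeval_def, ← Polynomial.eval_map, hmap]; exact hpe
  · rintro ⟨q, hq0, hqe⟩
    refine ⟨q.map (algebraMap ↥F Ω), ?_, ?_, ?_⟩
    · intro h
      exact hq0 (Polynomial.map_injective _ (algebraMap ↥F Ω).injective (by simpa using h))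
    · intro i; rw [Polynomial.coeff_map]; exact (q.coeff i).2
    · rw [Polynomial.eval_map, ← Polynomial.aeval_def]; exact hqe

lemma AlgOver.inv {F : Subfield Ω} {x : Ω} (hx : AlgOver F x) : AlgOver F x⁻¹ := by
  rcases eq_or_ne x 0 with rfl | hx0
  · simpa using algOver_of_mem F.zero_mem
  obtain ⟨p, hp0, hpc, hpe⟩ := hx
  classical
  set N := p.natDegree with hN
  refine ⟨∑ i ∈ Finset.range (N + 1), Polynomial.C (p.coeff (N - i)) * Polynomial.X ^ i, ?_, ?_, ?_⟩
  · intro h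
    apply hp0
    have hl : p.coeff N ≠ 0 := Polynomial.leadingCoeff_ne_zero.2 hp0
    have := congrArg (Polynomial.coeff · 0) h
    simp only [Polynomial.finset_sum_coeff, Polynomial.coeff_C_mul, Polynomial.coeff_X_pow,
      Polynomial.coeff_zero] at this
    rw [Finset.sum_eq_single 0] at this
    · simp only [if_pos rfl, if_true, eq_self_iff_true, mul_one, Nat.sub_zero] at this
      exact absurd this hl
    · intro b _ hb; rw [if_neg (Ne.symm hb), mul_zero]
    · intro hb; exact absurd (Finset.mem_range.2 (Nat.succ_pos N)) hb
  · intro i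
    rw [Polynomial.finset_sum_coeff]
    apply Subfield.sum_mem
    intro j _
    rw [Polynomial.coeff_C_mul, Polynomial.coeff_X_pow]
    rcases eq_or_ne j i with rfl | hj
    · simpa using hpc _
    · rw [if_neg (Ne.symm hj), mul_zero]; exact F.zero_mem
  · have hxn : (x : Ω) ^ N ≠ 0 := pow_ne_zero _ hx0
    have key : x ^ N * Polynomial.eval x⁻¹
        (∑ i ∈ Finset.range (N + 1), Polynomial.C (p.coeff (N - i)) * Polynomial.X ^ i)
        = Polynomial.eval x p := by
      rw [Polynomial.eval_finset_sum, Finset.mul_sum]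
      have : ∀ i ∈ Finset.range (N + 1),
          x ^ N * Polynomial.eval x⁻¹ (Polynomial.C (p.coeff (N - i)) * Polynomial.X ^ i)
          = p.coeff (N - i) * x ^ (N - i) := by
        intro i hi
        rw [Finset.mem_range, Nat.lt_succ_iff] at hi
        rw [Polynomial.eval_mul, Polynomial.eval_C, Polynomial.eval_pow, Polynomial.eval_X]
        rw [pow_sub₀ x hx0 hi, inv_pow]
        ring
      rw [Finset.sum_congr rfl this]
      have := Finset.sum_range_reflect (fun j => p.coeff j * x ^ j) (N + 1)
      simp only [Nat.add_sub_cancel] at this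
      rw [this, ← Polynomial.eval_eq_sum_range]
    rw [hpe] at key
    exact (mul_eq_zero.1 key).resolve_left hxn

section Trans
variable {Ω : Type*} [Field Ω]
open MvPolynomial Set

/-- transitivity of algebraicity through an adjoined set of algebraic elements -/
lemma algOver_adjoin_trans {G : Subfield Ω} {s : Set Ω} (hs : ∀ y ∈ s, AlgOver G y)
    {x : Ω} (hx : AlgOver (adj G s) x) : AlgOver G x := by
  have hGT : G ≤ adj G s := le_adj G s
  letI : Algebra ↥G ↥(adj G s) := (Subfield.inclusion hGT).toAlgebra
  haveI : IsScalarTower ↥G ↥(adj G s) Ω := IsScalarTower.of_algebraMap_eq (fun y => rfl)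
  have hTint : ∀ z ∈ Subfield.closure (↑G ∪ s), IsIntegral ↥G z := by
    intro z hz
    induction hz using Subfield.closure_induction with
    | mem y hy =>
      rcases hy with hy | hy
      · exact (isIntegral_algebraMap (x := (⟨y, hy⟩ : ↥G)))
      · exact ((algOver_iff_isAlgebraic G y).1 (hs y hy)).isIntegral
    | one => exact isIntegral_one
    | add a b _ _ iha ihb => exact iha.add ihb
    | neg a _ iha => exact iha.neg
    | inv a _ iha =>
      exact ((algOver_iff_isAlgebraic G a⁻¹).1
        (((algOver_iff_isAlgebraic G a).2 iha.isAlgebraic).inv)).isIntegral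
    | mul a b _ _ iha ihb => exact iha.mul ihb
  haveI : Algebra.IsIntegral ↥G ↥(adj G s) := by
    constructor
    intro z
    exact IsIntegral.tower_bot (B := Ω) ((algebraMap ↥(adj G s) Ω).injective) (hTint z.1 z.2)
  have hxT : IsIntegral ↥(adj G s) x := ((algOver_iff_isAlgebraic _ x).1 hx).isIntegral
  exact (algOver_iff_isAlgebraic G x).2 (isIntegral_trans x hxT).isAlgebraic

/-- coefficients in a subfield form a subring of the polynomial ring -/
def coeffsIn (κ : Type*) (H : Subfield Ω) : Subring (MvPolynomial κ Ω) where
  carrier := {q | ∀ ν, MvPolynomial.coeff ν q ∈ H}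
  zero_mem' := by intro ν; rw [coeff_zero]; exact H.zero_mem
  one_mem' := by
    intro ν; classical
    rw [coeff_one]
    split
    · exact H.one_mem
    · exact H.zero_mem
  add_mem' := by intro a b ha hb ν; rw [coeff_add]; exact H.add_mem (ha ν) (hb ν)
  neg_mem' := by intro a ha ν; rw [coeff_neg]; exact H.neg_mem (ha ν)
  mul_mem' := by
    intro a b ha hb ν; classical
    rw [coeff_mul]
    exact H.sum_mem (fun c _ => H.mul_mem (ha c.1) (hb c.2))

lemma mem_coeffsIn {κ : Type*} {H : Subfield Ω} {q : MvPolynomial κ Ω} :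
    q ∈ coeffsIn κ H ↔ ∀ ν, MvPolynomial.coeff ν q ∈ H := Iff.rfl

variable {ι : Type*}

lemma coeffs_one (H : Subfield Ω) : ∀ m, MvPolynomial.coeff m (1 : MvPolynomial ι Ω) ∈ H :=
  mem_coeffsIn.1 (coeffsIn ι H).one_mem

lemma coeffs_zero (H : Subfield Ω) : ∀ m, MvPolynomial.coeff m (0 : MvPolynomial ι Ω) ∈ H :=
  mem_coeffsIn.1 (coeffsIn ι H).zero_mem

lemma coeffs_add {H : Subfield Ω} {p q : MvPolynomial ι Ω}
    (hp : ∀ m, MvPolynomial.coeff m p ∈ H) (hq : ∀ m, MvPolynomial.coeff m q ∈ H) :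
    ∀ m, MvPolynomial.coeff m (p + q) ∈ H :=
  mem_coeffsIn.1 ((coeffsIn ι H).add_mem (mem_coeffsIn.2 hp) (mem_coeffsIn.2 hq))

lemma coeffs_mul {H : Subfield Ω} {p q : MvPolynomial ι Ω}
    (hp : ∀ m, MvPolynomial.coeff m p ∈ H) (hq : ∀ m, MvPolynomial.coeff m q ∈ H) :
    ∀ m, MvPolynomial.coeff m (p * q) ∈ H :=
  mem_coeffsIn.1 ((coeffsIn ι H).mul_mem (mem_coeffsIn.2 hp) (mem_coeffsIn.2 hq))

lemma coeffs_neg {H : Subfield Ω} {p : MvPolynomial ι Ω}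
    (hp : ∀ m, MvPolynomial.coeff m p ∈ H) :
    ∀ m, MvPolynomial.coeff m (-p) ∈ H :=
  mem_coeffsIn.1 ((coeffsIn ι H).neg_mem (mem_coeffsIn.2 hp))

lemma coeffs_prod {H : Subfield Ω} {α : Type*} {s : Finset α} {f : α → MvPolynomial ι Ω}
    (hf : ∀ a ∈ s, ∀ m, MvPolynomial.coeff m (f a) ∈ H) :
    ∀ m, MvPolynomial.coeff m (∏ a ∈ s, f a) ∈ H :=
  mem_coeffsIn.1 ((coeffsIn ι H).prod_mem (fun a ha => mem_coeffsIn.2 (hf a ha)))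

lemma eval_mem_of_coeffs {ι : Type*} {H : Subfield Ω} {t : ι → Ω} {p : MvPolynomial ι Ω}
    (hc : ∀ m, MvPolynomial.coeff m p ∈ H) (ht : ∀ i, t i ∈ H) :
    MvPolynomial.eval t p ∈ H :=
  MvPolynomial.eval_mem (fun i _ => hc i) ht

lemma algIndepOver_mono {F G : Subfield Ω} {ι : Type*} {t : ι → Ω}
    (h : AlgIndepOver G t) (hFG : F ≤ G) : AlgIndepOver F t :=
  fun P hc he => h P (fun m => hFG (hc m)) he

lemma algIndepOver_comp_inj {F : Subfield Ω} {ι ι' : Type*} {t : ι → Ω}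
    (h : AlgIndepOver F t) {f : ι' → ι} (hf : Function.Injective f) :
    AlgIndepOver F (t ∘ f) := by
  intro P hc he
  have h1 : ∀ m, MvPolynomial.coeff m (rename f P) ∈ F := by
    intro m
    by_cases h0 : MvPolynomial.coeff m (rename f P) = 0
    · rw [h0]; exact F.zero_mem
    · obtain ⟨u, hu, _⟩ := coeff_rename_ne_zero f P m h0
      rw [← hu, coeff_rename_mapDomain f hf]
      exact hc u
  have h2 : MvPolynomial.eval t (rename f P) = 0 := by rw [eval_rename]; exact he
  have h3 := h _ h1 h2
  apply rename_injective f hf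
  rw [h3, map_zero]

lemma algIndepOver_comp_equiv {F : Subfield Ω} {ι ι' : Type*} {t : ι → Ω} (e : ι' ≃ ι) :
    AlgIndepOver F (t ∘ e) ↔ AlgIndepOver F t := by
  constructor
  · intro h
    have := algIndepOver_comp_inj h e.symm.injective
    have he : (t ∘ ⇑e) ∘ ⇑e.symm = t := by funext x; simp
    rwa [he] at this
  · intro h; exact algIndepOver_comp_inj h e.injective

/-- representation of elements of `adj F (range t)` as fractions -/
lemma exists_repr {F : Subfield Ω} {ι : Type*} {t : ι → Ω} {x : Ω}
    (hx : x ∈ adj F (Set.range t)) :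
    ∃ p q : MvPolynomial ι Ω, (∀ m, MvPolynomial.coeff m p ∈ F) ∧
      (∀ m, MvPolynomial.coeff m q ∈ F) ∧ MvPolynomial.eval t q ≠ 0 ∧
      x * MvPolynomial.eval t q = MvPolynomial.eval t p := by
  classical
  induction hx using Subfield.closure_induction with
  | mem y hy =>
    rcases hy with hy | ⟨i, rfl⟩
    · refine ⟨C y, 1, ?_, ?_, by simp, by simp⟩
      · intro m; rw [coeff_C]; split; exacts [hy, F.zero_mem]
      · exact coeffs_one F
    · refine ⟨X i, 1, ?_, coeffs_one F, by simp, by simp⟩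
      intro m
      rw [MvPolynomial.coeff_X']
      split; exacts [F.one_mem, F.zero_mem]
  | one => exact ⟨1, 1, coeffs_one F, coeffs_one F, by simp, by simp⟩
  | add a b _ _ iha ihb =>
    obtain ⟨pa, qa, hpa, hqa, hqa0, ha⟩ := iha
    obtain ⟨pb, qb, hpb, hqb, hqb0, hb⟩ := ihb
    refine ⟨pa * qb + pb * qa, qa * qb, ?_, ?_, ?_, ?_⟩
    · exact coeffs_add (coeffs_mul hpa hqb) (coeffs_mul hpb hqa)
    · exact coeffs_mul hqa hqb
    · rw [map_mul]; exact mul_ne_zero hqa0 hqb0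
    · rw [map_mul, map_add, map_mul, map_mul]
      calc (a + b) * (eval t qa * eval t qb)
          = (a * eval t qa) * eval t qb + (b * eval t qb) * eval t qa := by ring
        _ = eval t pa * eval t qb + eval t pb * eval t qa := by rw [ha, hb]
  | neg a _ iha =>
    obtain ⟨pa, qa, hpa, hqa, hqa0, ha⟩ := iha
    exact ⟨-pa, qa, coeffs_neg hpa, hqa, hqa0, by rw [map_neg, neg_mul, ha]⟩
  | inv a _ iha =>
    obtain ⟨pa, qa, hpa, hqa, hqa0, ha⟩ := iha
    rcases eq_or_ne a 0 with rfl | ha0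
    · exact ⟨0, 1, coeffs_zero F, coeffs_one F, by simp, by simp⟩
    · have hpa0 : MvPolynomial.eval t pa ≠ 0 := by
        rw [← ha]; exact mul_ne_zero ha0 hqa0
      refine ⟨qa, pa, hqa, hpa, hpa0, ?_⟩
      rw [← ha]
      field_simp
  | mul a b _ _ iha ihb =>
    obtain ⟨pa, qa, hpa, hqa, hqa0, ha⟩ := iha
    obtain ⟨pb, qb, hpb, hqb, hqb0, hb⟩ := ihb
    refine ⟨pa * pb, qa * qb, coeffs_mul hpa hpb, coeffs_mul hqa hqb,
      by rw [map_mul]; exact mul_ne_zero hqa0 hqb0, ?_⟩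
    rw [map_mul, map_mul]
    calc (a * b) * (eval t qa * eval t qb) = (a * eval t qa) * (b * eval t qb) := by ring
      _ = eval t pa * eval t pb := by rw [ha, hb]
end Trans

section Concat
open MvPolynomial Set
open scoped Classical
variable {Ω : Type*} [Field Ω] {ι κ : Type*}

noncomputable def Esplit (ι κ : Type*) : ((ι ⊕ κ) →₀ ℕ) ≃ ((ι →₀ ℕ) × (κ →₀ ℕ)) :=
  Finsupp.sumFinsuppEquivProdFinsupp

lemma aeval_eq_eval (f : ι → Ω) (p : MvPolynomial ι Ω) :
    MvPolynomial.aeval f p = MvPolynomial.eval f p := by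
  rw [MvPolynomial.aeval_def, Algebra.algebraMap_self]
  rfl

noncomputable def phi (b : ι → Ω) : MvPolynomial (ι ⊕ κ) Ω →ₐ[Ω] MvPolynomial κ Ω :=
  MvPolynomial.aeval (Sum.elim (fun i => C (b i)) X)

lemma phi_rename_inl (b : ι → Ω) (p : MvPolynomial ι Ω) :
    phi (κ := κ) b (rename Sum.inl p) = C (MvPolynomial.eval b p) := by
  have h : (phi (κ := κ) b).comp (rename Sum.inl)
      = (Algebra.ofId Ω (MvPolynomial κ Ω)).comp (MvPolynomial.aeval b) := by
    apply algHom_ext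
    intro i
    simp [phi, Algebra.ofId_apply, MvPolynomial.algebraMap_eq, aeval_eq_eval]
  have := DFunLike.congr_fun h p
  simpa [Algebra.ofId_apply, MvPolynomial.algebraMap_eq, aeval_eq_eval] using this

lemma phi_rename_inr (b : ι → Ω) (q : MvPolynomial κ Ω) :
    phi b (rename Sum.inr q) = q := by
  have h : (phi (κ := κ) b).comp (rename Sum.inr) = AlgHom.id Ω (MvPolynomial κ Ω) := by
    apply algHom_ext
    intro i
    simp [phi]
  exact DFunLike.congr_fun h q

lemma eval_phi (b : ι → Ω) (c : κ → Ω) (P : MvPolynomial (ι ⊕ κ) Ω) :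
    MvPolynomial.eval c (phi b P) = MvPolynomial.eval (Sum.elim b c) P := by
  have h : (MvPolynomial.eval c).comp (phi (κ := κ) b).toRingHom
      = MvPolynomial.eval (Sum.elim b c) := by
    apply ringHom_ext
    · intro r; simp [phi, aeval_eq_eval]
    · intro i
      cases i with
      | inl i => simp [phi]
      | inr j => simp [phi]
  exact DFunLike.congr_fun h P

lemma monomial_decomp (m : (ι ⊕ κ) →₀ ℕ) (a : Ω) :
    (monomial m a : MvPolynomial (ι ⊕ κ) Ω)
      = rename Sum.inl (monomial ((Esplit ι κ) m).1 a)
        * rename Sum.inr (monomial ((Esplit ι κ) m).2 1) := by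
  have hm : m = Finsupp.mapDomain Sum.inl ((Esplit ι κ) m).1
      + Finsupp.mapDomain Sum.inr ((Esplit ι κ) m).2 := by
    refine Finsupp.ext fun x => ?_
    cases x with
    | inl i =>
      rw [Finsupp.add_apply, Finsupp.mapDomain_apply Sum.inl_injective,
        Finsupp.mapDomain_notin_range _ _ (by simp), add_zero]
      exact (Finsupp.fst_sumFinsuppEquivProdFinsupp m i).symm
    | inr j =>
      rw [Finsupp.add_apply, Finsupp.mapDomain_apply Sum.inr_injective,
        Finsupp.mapDomain_notin_range _ _ (by simp), zero_add]
      exact (Finsupp.snd_sumFinsuppEquivProdFinsupp m j).symm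
  rw [rename_monomial, rename_monomial, monomial_mul, mul_one, ← hm]

noncomputable def slice (ν : κ →₀ ℕ) (P : MvPolynomial (ι ⊕ κ) Ω) : MvPolynomial ι Ω :=
  ∑ m ∈ P.support,
    if ((Esplit ι κ) m).2 = ν then monomial ((Esplit ι κ) m).1 (MvPolynomial.coeff m P) else 0

lemma coeff_slice (ν : κ →₀ ℕ) (P : MvPolynomial (ι ⊕ κ) Ω) (μ : ι →₀ ℕ) :
    MvPolynomial.coeff μ (slice ν P) = MvPolynomial.coeff ((Esplit ι κ).symm (μ, ν)) P := by
  rw [slice, MvPolynomial.coeff_sum]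
  have hterm : ∀ m ∈ P.support,
      MvPolynomial.coeff μ
        (if ((Esplit ι κ) m).2 = ν then monomial ((Esplit ι κ) m).1 (MvPolynomial.coeff m P) else 0)
      = if m = (Esplit ι κ).symm (μ, ν) then MvPolynomial.coeff m P else 0 := by
    intro m _
    by_cases hm : m = (Esplit ι κ).symm (μ, ν)
    · rw [if_pos hm]
      have h2 : ((Esplit ι κ) m).2 = ν := by rw [hm, Equiv.apply_symm_apply]
      have h1 : ((Esplit ι κ) m).1 = μ := by rw [hm, Equiv.apply_symm_apply]
      rw [if_pos h2, coeff_monomial, if_pos h1]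
    · rw [if_neg hm]
      split_ifs with h1
      · rw [coeff_monomial, if_neg]
        intro h2
        apply hm
        rw [← Equiv.symm_apply_apply (Esplit ι κ) m]
        congr 1
        exact Prod.ext h2 h1
      · exact MvPolynomial.coeff_zero μ
  rw [Finset.sum_congr rfl hterm, Finset.sum_ite_eq' P.support ((Esplit ι κ).symm (μ, ν))
    (fun m => MvPolynomial.coeff m P)]
  split_ifs with h
  · rfl
  · exact (MvPolynomial.notMem_support_iff.1 h).symm

lemma slice_add (ν : κ →₀ ℕ) (P Q : MvPolynomial (ι ⊕ κ) Ω) :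
    slice ν (P + Q) = slice ν P + slice ν Q := by
  apply MvPolynomial.ext
  intro μ
  rw [coeff_add, coeff_slice, coeff_slice, coeff_slice, coeff_add]

lemma slice_monomial (ν : κ →₀ ℕ) (m : (ι ⊕ κ) →₀ ℕ) (a : Ω) :
    slice ν (monomial m a : MvPolynomial (ι ⊕ κ) Ω)
      = if ((Esplit ι κ) m).2 = ν then monomial ((Esplit ι κ) m).1 a else 0 := by
  apply MvPolynomial.ext
  intro μ
  rw [coeff_slice, coeff_monomial]
  by_cases h1 : ((Esplit ι κ) m).2 = ν
  · rw [if_pos h1, coeff_monomial]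
    by_cases hm : m = (Esplit ι κ).symm (μ, ν)
    · have h3 : ((Esplit ι κ) m).1 = μ := by rw [hm, Equiv.apply_symm_apply]
      rw [if_pos hm, if_pos h3]
    · rw [if_neg hm, if_neg]
      intro h2
      apply hm
      rw [← Equiv.symm_apply_apply (Esplit ι κ) m]
      congr 1
      exact Prod.ext h2 h1
  · rw [if_neg h1, MvPolynomial.coeff_zero, if_neg]
    intro hm
    exact h1 (by rw [hm, Equiv.apply_symm_apply])

lemma eval_slice (b : ι → Ω) (ν : κ →₀ ℕ) (P : MvPolynomial (ι ⊕ κ) Ω) :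
    MvPolynomial.eval b (slice ν P) = MvPolynomial.coeff ν (phi b P) := by
  induction P using MvPolynomial.induction_on' with
  | monomial m a =>
    rw [slice_monomial, monomial_decomp m a, map_mul, phi_rename_inl, phi_rename_inr,
      coeff_C_mul, coeff_monomial, apply_ite (MvPolynomial.eval b), map_zero]
    split_ifs with h1
    · rw [mul_one]
    · rw [mul_zero]
  | add p q ihp ihq =>
    rw [slice_add, map_add, map_add, MvPolynomial.coeff_add, ihp, ihq]

lemma slice_eq_zero_all {P : MvPolynomial (ι ⊕ κ) Ω}
    (h : ∀ ν, slice (Ω := Ω) ν P = 0) : P = 0 := by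
  apply MvPolynomial.ext
  intro m
  have := congrArg (MvPolynomial.coeff ((Esplit ι κ) m).1) (h ((Esplit ι κ) m).2)
  rw [coeff_slice] at this
  simpa [Equiv.symm_apply_apply] using this

lemma coeffs_slice {F : Subfield Ω} {P : MvPolynomial (ι ⊕ κ) Ω}
    (hc : ∀ m, MvPolynomial.coeff m P ∈ F) (ν : κ →₀ ℕ) :
    ∀ μ, MvPolynomial.coeff μ (slice (Ω := Ω) ν P) ∈ F := by
  intro μ
  rw [coeff_slice]
  exact hc _

lemma algIndepOver_sum_iff {F : Subfield Ω} {b : ι → Ω} {c : κ → Ω} :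
    AlgIndepOver F (Sum.elim b c) ↔
      AlgIndepOver F b ∧ AlgIndepOver (adj F (Set.range b)) c := by
  constructor
  · intro h
    constructor
    · have := algIndepOver_comp_inj h Sum.inl_injective
      have he : Sum.elim b c ∘ Sum.inl = b := rfl
      rwa [he] at this
    · intro Q hQc hQe
      choose p q hp hq hq0 heq using fun (x : Q.support) => exists_repr (hQc x.1)
      set G : MvPolynomial ι Ω := ∏ x ∈ Q.support.attach, q x with hG
      set P : MvPolynomial (ι ⊕ κ) Ω :=
        ∑ x ∈ Q.support.attach,
          rename Sum.inl (p x * ∏ y ∈ Q.support.attach.erase x, q y)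
            * rename Sum.inr (monomial x.1 1) with hP
      have hGne : MvPolynomial.eval b G ≠ 0 := by
        rw [hG, map_prod]
        exact Finset.prod_ne_zero_iff.2 (fun x _ => hq0 x)
      have hprod : ∀ x : Q.support,
          MvPolynomial.eval b (p x) * MvPolynomial.eval b (∏ y ∈ Q.support.attach.erase x, q y)
          = MvPolynomial.coeff x.1 Q * MvPolynomial.eval b G := by
        intro x
        rw [← heq x, hG, map_prod, map_prod]
        rw [mul_comm (MvPolynomial.coeff x.1 Q * MvPolynomial.eval b (q x))
          (∏ y ∈ Q.support.attach.erase x, MvPolynomial.eval b (q y))]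
        rw [← Finset.prod_erase_mul Q.support.attach (fun y => MvPolynomial.eval b (q y))
          (Finset.mem_attach _ x)]
        ring
      have hPc : ∀ m, MvPolynomial.coeff m P ∈ F := by
        rw [hP]
        apply mem_coeffsIn.1
        apply (coeffsIn _ F).sum_mem
        intro x _
        apply (coeffsIn _ F).mul_mem
        · apply mem_coeffsIn.2
          intro m
          by_cases h0 : MvPolynomial.coeff m
              (rename Sum.inl (p x * ∏ y ∈ Q.support.attach.erase x, q y)) = 0
          · rw [h0]; exact F.zero_mem
          · obtain ⟨u, hu, _⟩ := coeff_rename_ne_zero _ _ _ h0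
            rw [← hu, coeff_rename_mapDomain _ Sum.inl_injective]
            exact coeffs_mul (hp x) (coeffs_prod (fun y _ => hq y)) u
        · apply mem_coeffsIn.2
          intro m
          rw [rename_monomial, coeff_monomial]
          split
          · exact F.one_mem
          · exact F.zero_mem
      have hPe : MvPolynomial.eval (Sum.elim b c) P = 0 := by
        rw [hP, map_sum]
        have hterm : ∀ x ∈ Q.support.attach,
            MvPolynomial.eval (Sum.elim b c)
              (rename Sum.inl (p x * ∏ y ∈ Q.support.attach.erase x, q y)
                * rename Sum.inr (monomial x.1 1))
            = MvPolynomial.eval b G *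
                (MvPolynomial.coeff x.1 Q * MvPolynomial.eval c (monomial x.1 1)) := by
          intro x _
          rw [map_mul, eval_rename, eval_rename]
          have h1 : Sum.elim b c ∘ Sum.inl = b := rfl
          have h2 : Sum.elim b c ∘ Sum.inr = c := rfl
          rw [h1, h2, map_mul, hprod x]
          ring
        rw [Finset.sum_congr rfl hterm, ← Finset.mul_sum]
        have hQdecomp : ∑ x ∈ Q.support.attach,
            MvPolynomial.coeff x.1 Q * MvPolynomial.eval c (monomial x.1 1)
            = MvPolynomial.eval c Q := by
          rw [Finset.sum_attach Q.support
            (fun ν => MvPolynomial.coeff ν Q * MvPolynomial.eval c (monomial ν 1))]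
          conv_rhs => rw [MvPolynomial.as_sum Q]
          rw [map_sum]
          apply Finset.sum_congr rfl
          intro ν _
          rw [eval_monomial, eval_monomial, one_mul]
        rw [hQdecomp, hQe, mul_zero]
      have hP0 : P = 0 := h P hPc hPe
      have hphi : phi b P = 0 := by rw [hP0, map_zero]
      have hcoeffQ : ∀ ν ∈ Q.support, MvPolynomial.coeff ν Q = 0 := by
        intro ν hν
        have h1 : MvPolynomial.coeff ν (phi b P) =
            MvPolynomial.eval b (p ⟨ν, hν⟩)
              * MvPolynomial.eval b (∏ y ∈ Q.support.attach.erase ⟨ν, hν⟩, q y) := by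
          rw [hP, map_sum, MvPolynomial.coeff_sum]
          have hterm : ∀ x ∈ Q.support.attach,
              MvPolynomial.coeff ν (phi b (rename Sum.inl (p x * ∏ y ∈ Q.support.attach.erase x, q y)
                * rename Sum.inr (monomial x.1 1)))
              = if x = (⟨ν, hν⟩ : {y // y ∈ Q.support}) then
                  MvPolynomial.eval b (p x)
                    * MvPolynomial.eval b (∏ y ∈ Q.support.attach.erase x, q y) else 0 := by
            intro x _
            rw [map_mul, phi_rename_inl, phi_rename_inr, coeff_C_mul, coeff_monomial]
            by_cases hx : x = (⟨ν, hν⟩ : {y // y ∈ Q.support})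
            · have : (x.1 : κ →₀ ℕ) = ν := by rw [hx]
              rw [if_pos hx, if_pos this, mul_one, map_mul]
            · rw [if_neg hx, if_neg, mul_zero]
              intro h2
              exact hx (Subtype.ext h2)
          rw [Finset.sum_congr rfl hterm, Finset.sum_ite_eq' Q.support.attach]
          rw [if_pos (Finset.mem_attach _ _)]
        rw [hphi, MvPolynomial.coeff_zero] at h1
        have h2 := h1.symm
        rw [hprod ⟨ν, hν⟩] at h2
        rcases mul_eq_zero.1 h2 with h4 | h4
        · exact h4
        · exact absurd h4 hGne
      apply MvPolynomial.ext
      intro ν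
      by_cases hν : ν ∈ Q.support
      · rw [hcoeffQ ν hν, MvPolynomial.coeff_zero]
      · rw [MvPolynomial.notMem_support_iff.1 hν, MvPolynomial.coeff_zero]
  · rintro ⟨hb, hc⟩
    intro P hPc hPe
    have hQc : ∀ ν, MvPolynomial.coeff ν (phi b P) ∈ adj F (Set.range b) := by
      intro ν
      rw [← eval_slice]
      apply eval_mem_of_coeffs
      · exact fun μ => le_adj F _ (coeffs_slice hPc ν μ)
      · exact fun i => subset_adj F _ ⟨i, rfl⟩
    have hQe : MvPolynomial.eval c (phi b P) = 0 := by rw [eval_phi]; exact hPe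
    have hQ0 : phi b P = 0 := hc _ hQc hQe
    apply slice_eq_zero_all
    intro ν
    apply hb
    · exact coeffs_slice hPc ν
    · rw [eval_slice, hQ0, MvPolynomial.coeff_zero]
end Concat

section Tuples
open MvPolynomial Set
open scoped Classical
variable {Ω : Type*} [Field Ω] {ι : Type*} {F : Subfield Ω}

lemma algIndepOver_of_isEmpty [IsEmpty ι] {t : ι → Ω} : AlgIndepOver F t := by
  intro P hc he
  have hP : P = C (MvPolynomial.coeff 0 P) := by
    apply MvPolynomial.ext
    intro m
    have hm : m = 0 := Finsupp.ext (fun a => (IsEmpty.false a).elim)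
    rw [hm, coeff_C, if_pos rfl]
  rw [hP] at he ⊢
  rw [eval_C] at he
  rw [he, map_zero]

lemma algIndepOver_unit_iff {x : Ω} :
    AlgIndepOver F (fun _ : Unit => x) ↔ ¬ AlgOver F x := by
  constructor
  · intro h hAlg
    obtain ⟨p, hp0, hpc, hpe⟩ := hAlg
    set P : MvPolynomial Unit Ω :=
      ∑ i ∈ p.support.attach, monomial (Finsupp.single Unit.unit i.1) (p.coeff i.1) with hPdef
    have hcoeff : ∀ j : ℕ, MvPolynomial.coeff (Finsupp.single Unit.unit j) P = p.coeff j := by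
      intro j
      rw [hPdef, MvPolynomial.coeff_sum]
      have hterm : ∀ i ∈ p.support.attach,
          MvPolynomial.coeff (Finsupp.single Unit.unit j)
            (monomial (Finsupp.single Unit.unit i.1) (p.coeff i.1))
          = if i.1 = j then p.coeff i.1 else 0 := by
        intro i _
        rw [coeff_monomial]
        by_cases hij : (i.1 : ℕ) = j
        · rw [if_pos hij, if_pos (by rw [hij])]
        · rw [if_neg hij, if_neg]
          intro hcon
          exact hij (by
            have := congrArg (fun f : Unit →₀ ℕ => f Unit.unit) hcon
            simpa using this)
      rw [Finset.sum_congr rfl hterm]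
      rw [Finset.sum_attach p.support (fun i => if i = j then p.coeff i else 0)]
      rw [Finset.sum_ite_eq' p.support j (fun i => p.coeff i)]
      split_ifs with h
      · rfl
      · exact (Polynomial.notMem_support_iff.1 h).symm
    have hallcoeff : ∀ m : Unit →₀ ℕ, MvPolynomial.coeff m P ∈ F := by
      intro m
      have hm : m = Finsupp.single Unit.unit (m Unit.unit) := by
        refine Finsupp.ext fun a => ?_
        cases a
        simp
      rw [hm, hcoeff]
      exact hpc _
    have heval : MvPolynomial.eval (fun _ : Unit => x) P = Polynomial.eval x p := by
      rw [hPdef, map_sum]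
      have hterm : ∀ i ∈ p.support.attach,
          MvPolynomial.eval (fun _ : Unit => x)
            (monomial (Finsupp.single Unit.unit i.1) (p.coeff i.1))
          = p.coeff i.1 * x ^ (i.1 : ℕ) := by
        intro i _
        rw [eval_monomial]
        congr 1
        rw [Finsupp.prod_single_index]
        simp
      rw [Finset.sum_congr rfl hterm]
      rw [Finset.sum_attach p.support (fun i => p.coeff i * x ^ i)]
      rw [Polynomial.eval_eq_sum, Polynomial.sum_def]
    have hP0 := h P hallcoeff (by rw [heval, hpe])
    have hlead : p.coeff p.natDegree ≠ 0 := Polynomial.leadingCoeff_ne_zero.2 hp0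
    apply hlead
    rw [← hcoeff p.natDegree, hP0, MvPolynomial.coeff_zero]
  · intro hnAlg P hPc hPe
    by_contra hP0
    apply hnAlg
    set pp : Polynomial Ω :=
      ∑ m ∈ P.support, Polynomial.C (MvPolynomial.coeff m P) * Polynomial.X ^ (m Unit.unit)
      with hppdef
    have hinj : ∀ m₁ m₂ : Unit →₀ ℕ, m₁ Unit.unit = m₂ Unit.unit → m₁ = m₂ := by
      intro m₁ m₂ h
      refine Finsupp.ext fun a => ?_
      cases a
      exact h
    have hppc : ∀ i, pp.coeff i ∈ F := by
      intro i
      rw [hppdef, Polynomial.finset_sum_coeff]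
      apply F.sum_mem
      intro m _
      rw [Polynomial.coeff_C_mul, Polynomial.coeff_X_pow]
      split_ifs
      · rw [mul_one]; exact hPc m
      · rw [mul_zero]; exact F.zero_mem
    have hprodeq : ∀ m : Unit →₀ ℕ, (∏ u ∈ m.support, x ^ (m u)) = x ^ (m Unit.unit) := by
      intro m
      by_cases hm0 : m Unit.unit = 0
      · have : m = 0 := hinj m 0 (by simpa using hm0)
        rw [this]
        simp
      · have hm : m = Finsupp.single Unit.unit (m Unit.unit) := by
          refine Finsupp.ext fun a => ?_
          cases a
          simp
        rw [hm, Finsupp.support_single_ne_zero _ (by simpa using hm0)]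
        simp
    have hppe : Polynomial.eval x pp = 0 := by
      rw [hppdef, Polynomial.eval_finset_sum]
      have hterm : ∀ m ∈ P.support,
          Polynomial.eval x (Polynomial.C (MvPolynomial.coeff m P) * Polynomial.X ^ (m Unit.unit))
          = MvPolynomial.coeff m P * ∏ u ∈ m.support, x ^ (m u) := by
        intro m _
        rw [Polynomial.eval_mul, Polynomial.eval_C, Polynomial.eval_pow, Polynomial.eval_X,
          hprodeq m]
      rw [Finset.sum_congr rfl hterm, ← MvPolynomial.eval_eq]
      exact hPe
    have hpp0 : pp ≠ 0 := by
      have hsupp : P.support.Nonempty := by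
        rw [Finset.nonempty_iff_ne_empty]
        intro hempty
        apply hP0
        apply MvPolynomial.ext
        intro m
        rw [MvPolynomial.coeff_zero]
        by_contra hc
        have hm : m ∈ P.support := MvPolynomial.mem_support_iff.2 hc
        rw [hempty] at hm
        exact absurd hm (Finset.notMem_empty m)
      obtain ⟨m₀, hm₀⟩ := hsupp
      intro hcon
      have hcoeffpp : pp.coeff (m₀ Unit.unit) = MvPolynomial.coeff m₀ P := by
        rw [hppdef, Polynomial.finset_sum_coeff]
        have hterm : ∀ m ∈ P.support,
            (Polynomial.C (MvPolynomial.coeff m P) * Polynomial.X ^ (m Unit.unit)).coeff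
              (m₀ Unit.unit)
            = if m = m₀ then MvPolynomial.coeff m P else 0 := by
          intro m _
          rw [Polynomial.coeff_C_mul, Polynomial.coeff_X_pow]
          by_cases hm : m = m₀
          · rw [if_pos (by rw [hm]), if_pos hm, mul_one]
          · rw [if_neg, if_neg hm, mul_zero]
            intro hcon2
            exact hm (hinj m m₀ hcon2.symm)
        rw [Finset.sum_congr rfl hterm, Finset.sum_ite_eq' P.support m₀
          (fun m => MvPolynomial.coeff m P), if_pos hm₀]
      rw [hcon, Polynomial.coeff_zero] at hcoeffpp
      exact (MvPolynomial.mem_support_iff.1 hm₀) hcoeffpp.symm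
    exact ⟨pp, hpp0, hppc, hppe⟩

def finSnocEquiv (n : ℕ) : (Fin n ⊕ Unit) ≃ Fin (n + 1) where
  toFun := Sum.elim Fin.castSucc (fun _ => Fin.last n)
  invFun := fun i => if h : (i : ℕ) < n then Sum.inl ⟨i, h⟩ else Sum.inr Unit.unit
  left_inv := by
    rintro (i | u)
    · simp [Fin.castSucc, Fin.is_lt]
    · simp
  right_inv := by
    intro i
    by_cases h : (i : ℕ) < n
    · simp only [dif_pos h]
      exact Fin.ext rfl
    · simp only [dif_neg h]
      have : (i : ℕ) = n := Nat.le_antisymm (Nat.lt_succ_iff.1 i.isLt) (Nat.le_of_not_lt h)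
      exact Fin.ext this.symm

lemma snoc_comp_finSnocEquiv {n : ℕ} (t : Fin n → Ω) (x : Ω) :
    (Fin.snoc t x : Fin (n+1) → Ω) ∘ (finSnocEquiv n) = Sum.elim t (fun _ : Unit => x) := by
  funext i
  cases i with
  | inl i => simp [finSnocEquiv, Fin.snoc_castSucc]
  | inr u => simp [finSnocEquiv, Fin.snoc_last]

lemma algIndepOver_snoc_iff {n : ℕ} {t : Fin n → Ω} {x : Ω} :
    AlgIndepOver F (Fin.snoc t x : Fin (n+1) → Ω) ↔
      AlgIndepOver F t ∧ ¬ AlgOver (adj F (Set.range t)) x := by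
  rw [← algIndepOver_comp_equiv (finSnocEquiv n), snoc_comp_finSnocEquiv,
    algIndepOver_sum_iff, algIndepOver_unit_iff]

lemma algIndepOver_sum_comm_mp {κ₁ κ₂ : Type*} {b : κ₁ → Ω} {c : κ₂ → Ω}
    (hh : AlgIndepOver F (Sum.elim b c)) : AlgIndepOver F (Sum.elim c b) := by
  have h : (Sum.elim b c) ∘ ⇑(Equiv.sumComm κ₂ κ₁) = Sum.elim c b := by
    funext i
    cases i <;> rfl
  rw [← h]
  exact (algIndepOver_comp_equiv _).2 hh

lemma algIndepOver_sum_comm {κ₁ κ₂ : Type*} {b : κ₁ → Ω} {c : κ₂ → Ω} :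
    AlgIndepOver F (Sum.elim b c) ↔ AlgIndepOver F (Sum.elim c b) :=
  ⟨algIndepOver_sum_comm_mp, algIndepOver_sum_comm_mp⟩

lemma algIndepOver_adj_algebraic {n : ℕ} :
    ∀ {F : Subfield Ω} {t : Fin n → Ω} {s : Set Ω},
    AlgIndepOver F t → (∀ y ∈ s, AlgOver F y) → AlgIndepOver (adj F s) t := by
  induction n with
  | zero => intro F t s _ _; exact algIndepOver_of_isEmpty
  | succ n ih =>
    intro F t s ht hs
    rw [← Fin.snoc_init_self t] at ht ⊢
    rw [algIndepOver_snoc_iff] at ht ⊢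
    obtain ⟨h1, h2⟩ := ht
    refine ⟨ih h1 hs, ?_⟩
    intro hcon
    apply h2
    have heq : adj (adj F s) (Set.range (Fin.init t)) = adj (adj F (Set.range (Fin.init t))) s := by
      rw [adj_adj, adj_adj, Set.union_comm]
    rw [heq] at hcon
    apply algOver_adjoin_trans ?_ hcon
    intro y hy
    exact AlgOver.mono (le_adj _ _) (hs y hy)

lemma exists_algOver_of_not_indep {n : ℕ} :
    ∀ {F : Subfield Ω} {t : Fin n → Ω}, ¬ AlgIndepOver F t →
      ∃ (m : ℕ) (hm : m < n), AlgOver (adj F (t '' {i : Fin n | (i : ℕ) < m})) (t ⟨m, hm⟩) := by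
  induction n with
  | zero => intro F t h; exact absurd algIndepOver_of_isEmpty h
  | succ n ih =>
    intro F t h
    rw [← Fin.snoc_init_self t, algIndepOver_snoc_iff] at h
    by_cases h1 : AlgIndepOver F (Fin.init t)
    · have h2 : AlgOver (adj F (Set.range (Fin.init t))) (t (Fin.last n)) := by
        by_contra h2
        exact h ⟨h1, h2⟩
      refine ⟨n, Nat.lt_succ_self n, ?_⟩
      have himg : Set.range (Fin.init t) = t '' {i : Fin (n+1) | (i : ℕ) < n} := by
        ext y
        constructor
        · rintro ⟨i, rfl⟩
          exact ⟨Fin.castSucc i, by simpa using i.isLt, rfl⟩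
        · rintro ⟨i, hi, rfl⟩
          refine ⟨⟨(i : ℕ), hi⟩, ?_⟩
          have hcast : Fin.castSucc (⟨(i : ℕ), hi⟩ : Fin n) = i := Fin.ext rfl
          show t (Fin.castSucc ⟨(i : ℕ), hi⟩) = t i
          rw [hcast]
      rw [himg] at h2
      have hlast : t (Fin.last n) = t ⟨n, Nat.lt_succ_self n⟩ := rfl
      rw [hlast] at h2
      exact h2
    · obtain ⟨m, hm, h3⟩ := ih h1
      refine ⟨m, Nat.lt_succ_of_lt hm, ?_⟩
      have himg : Fin.init t '' {i : Fin n | (i : ℕ) < m} = t '' {i : Fin (n+1) | (i : ℕ) < m} := by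
        ext y
        constructor
        · rintro ⟨i, hi, rfl⟩
          exact ⟨Fin.castSucc i, hi, rfl⟩
        · rintro ⟨i, hi, rfl⟩
          refine ⟨⟨(i : ℕ), lt_trans hi hm⟩, hi, ?_⟩
          have hcast : Fin.castSucc (⟨(i : ℕ), lt_trans hi hm⟩ : Fin n) = i := Fin.ext rfl
          show t (Fin.castSucc ⟨(i : ℕ), lt_trans hi hm⟩) = t i
          rw [hcast]
      rw [himg] at h3
      exact h3

lemma exists_greedy_basis {n : ℕ} :
    ∀ {F : Subfield Ω} {t : Fin n → Ω},
      ∃ (k : ℕ) (v : Fin k → Ω), (∀ j, ∃ i, v j = t i) ∧ AlgIndepOver F v ∧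
        (∀ i, AlgOver (adj F (Set.range v)) (t i)) := by
  induction n with
  | zero =>
    intro F t
    exact ⟨0, Fin.elim0, fun j => j.elim0, algIndepOver_of_isEmpty, fun i => i.elim0⟩
  | succ n ih =>
    intro F t
    obtain ⟨k, v, hv1, hv2, hv3⟩ := ih (t := Fin.init t)
    by_cases hlast : AlgOver (adj F (Set.range v)) (t (Fin.last n))
    · refine ⟨k, v, ?_, hv2, ?_⟩
      · intro j
        obtain ⟨i, hi⟩ := hv1 j
        exact ⟨Fin.castSucc i, by rw [hi]; simp [Fin.init]⟩
      · intro i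
        cases i using Fin.lastCases with
        | last => exact hlast
        | cast i => exact hv3 i
    · refine ⟨k + 1, Fin.snoc v (t (Fin.last n)), ?_, ?_, ?_⟩
      · intro j
        cases j using Fin.lastCases with
        | last => exact ⟨Fin.last n, by rw [Fin.snoc_last]⟩
        | cast j =>
          obtain ⟨i, hi⟩ := hv1 j
          exact ⟨Fin.castSucc i, by rw [Fin.snoc_castSucc, hi]; simp [Fin.init]⟩
      · exact algIndepOver_snoc_iff.2 ⟨hv2, hlast⟩
      · have hle : adj F (Set.range v) ≤ adj F (Set.range (Fin.snoc v (t (Fin.last n)))) := by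
          apply adj_mono le_rfl
          rintro y ⟨j, rfl⟩
          exact ⟨Fin.castSucc j, Fin.snoc_castSucc _ _ _⟩
        intro i
        cases i using Fin.lastCases with
        | last =>
          apply algOver_of_mem
          exact subset_adj _ _ ⟨Fin.last k, Fin.snoc_last _ _⟩
        | cast i => exact (hv3 i).mono hle

lemma exchange0 {E : Subfield Ω} {x y : Ω} (hx : AlgOver (adj E {y}) x)
    (hnx : ¬ AlgOver E x) : AlgOver (adj E {x}) y := by
  by_contra hny
  have hrange : ∀ z : Ω, Set.range (fun _ : Unit => z) = {z} := fun z => Set.range_const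
  have h1 : AlgIndepOver E (fun _ : Unit => x) := algIndepOver_unit_iff.2 hnx
  have h2 : AlgIndepOver (adj E (Set.range (fun _ : Unit => x))) (fun _ : Unit => y) := by
    rw [algIndepOver_unit_iff, hrange]
    exact hny
  have h3 : AlgIndepOver E (Sum.elim (fun _ : Unit => x) (fun _ : Unit => y)) :=
    algIndepOver_sum_iff.2 ⟨h1, h2⟩
  have h4 := (algIndepOver_sum_iff.1 (algIndepOver_sum_comm.1 h3)).2
  rw [algIndepOver_unit_iff, hrange] at h4
  exact h4 hx

lemma exchange1 {q : ℕ} :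
    ∀ {F : Subfield Ω} {t : Fin q → Ω} {x : Ω},
      AlgOver (adj F (Set.range t)) x → ¬ AlgOver F x →
      ∃ (q' : ℕ) (t' : Fin q' → Ω) (z : Ω), q' + 1 = q ∧ (∀ j, ∃ i, t' j = t i) ∧
        Set.range t ⊆ insert z (Set.range t') ∧
        AlgOver (adj F (insert x (Set.range t'))) z := by
  induction q with
  | zero =>
    intro F t x hx hnx
    exfalso
    apply hnx
    have : Set.range t = ∅ := Set.range_eq_empty t
    rw [this, adj_of_subset (Set.empty_subset _)] at hx
    exact hx
  | succ q ih =>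
    intro F t x hx hnx
    have himg : Set.range t = Set.range (Fin.init t) ∪ {t (Fin.last q)} := by
      ext y
      constructor
      · rintro ⟨i, rfl⟩
        cases i using Fin.lastCases with
        | last => exact Or.inr rfl
        | cast i => exact Or.inl ⟨i, rfl⟩
      · rintro (⟨i, rfl⟩ | h)
        · exact ⟨Fin.castSucc i, rfl⟩
        · exact ⟨Fin.last q, h.symm ▸ rfl⟩
    by_cases hcase : AlgOver (adj F (Set.range (Fin.init t))) x
    · obtain ⟨q', t', z, hq, ht'sub, hcover, halg⟩ := ih hcase hnx
      refine ⟨q' + 1, Fin.snoc t' (t (Fin.last q)), z, by omega, ?_, ?_, ?_⟩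
      · intro j
        cases j using Fin.lastCases with
        | last => exact ⟨Fin.last q, by rw [Fin.snoc_last]⟩
        | cast j =>
          obtain ⟨i, hi⟩ := ht'sub j
          exact ⟨Fin.castSucc i, by rw [Fin.snoc_castSucc, hi]; simp [Fin.init]⟩
      · have hrs : Set.range (Fin.snoc t' (t (Fin.last q)) : Fin (q'+1) → Ω)
            = Set.range t' ∪ {t (Fin.last q)} := by
          ext y
          constructor
          · rintro ⟨i, rfl⟩
            cases i using Fin.lastCases with
            | last => rw [Fin.snoc_last]; exact Or.inr rfl
            | cast i => rw [Fin.snoc_castSucc]; exact Or.inl ⟨i, rfl⟩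
          · rintro (⟨i, rfl⟩ | h)
            · exact ⟨Fin.castSucc i, Fin.snoc_castSucc _ _ _⟩
            · exact ⟨Fin.last q', h.symm ▸ Fin.snoc_last _ _⟩
        rw [himg, hrs]
        intro y hy
        rcases hy with hy | hy
        · have := hcover hy
          rcases this with h | h
          · exact Or.inl h
          · exact Or.inr (Or.inl h)
        · exact Or.inr (Or.inr hy)
      · apply halg.mono
        apply adj_mono le_rfl
        intro y hy
        rcases hy with hy | hy
        · exact Or.inl hy
        · refine Or.inr ?_
          obtain ⟨i, rfl⟩ := hy
          exact ⟨Fin.castSucc i, Fin.snoc_castSucc _ _ _⟩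
    · rw [himg, ← adj_adj] at hx
      have hz := exchange0 hx hcase
      refine ⟨q, Fin.init t, t (Fin.last q), rfl, fun j => ⟨Fin.castSucc j, rfl⟩, ?_, ?_⟩
      · rw [himg]
        intro y hy
        rcases hy with hy | hy
        · exact Or.inr hy
        · exact Or.inl hy
      · rw [adj_adj, Set.union_comm, ← Set.insert_eq] at hz
        exact hz

lemma exchange {p : ℕ} :
    ∀ {q : ℕ} {F : Subfield Ω} {u : Fin p → Ω} {t : Fin q → Ω},
      AlgIndepOver F u → (∀ i, AlgOver (adj F (Set.range t)) (u i)) → p ≤ q := by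
  induction p with
  | zero => intros; exact Nat.zero_le _
  | succ p ih =>
    intro q F u t hu halg
    set e1 : (Unit ⊕ Fin p) ≃ Fin (p + 1) :=
      (Equiv.sumComm Unit (Fin p)).trans (finSnocEquiv p) with he1
    have hcomp : u ∘ e1 = Sum.elim (fun _ : Unit => u (Fin.last p)) (Fin.init u) := by
      funext i
      cases i with
      | inl _ =>
        show u ((finSnocEquiv p) (Sum.inr Unit.unit)) = u (Fin.last p)
        rfl
      | inr i =>
        show u ((finSnocEquiv p) (Sum.inl i)) = Fin.init u i
        rfl
    have hu' := (algIndepOver_comp_equiv e1).2 hu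
    rw [hcomp] at hu'
    obtain ⟨hx, hrest⟩ := algIndepOver_sum_iff.1 hu'
    have hnx : ¬ AlgOver F (u (Fin.last p)) := algIndepOver_unit_iff.1 hx
    obtain ⟨q', t', z, hq, ht'sub, hcover, halgz⟩ := exchange1 (halg (Fin.last p)) hnx
    have hrange : Set.range (fun _ : Unit => u (Fin.last p)) = {u (Fin.last p)} :=
      Set.range_const
    rw [hrange] at hrest
    have halg' : ∀ j, AlgOver (adj (adj F {u (Fin.last p)}) (Set.range t')) (Fin.init u j) := by
      intro j
      have h1 : AlgOver (adj F (Set.range t)) (Fin.init u j) := halg (Fin.castSucc j)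
      have hle : adj F (Set.range t)
          ≤ adj (adj (adj F {u (Fin.last p)}) (Set.range t')) {z} := by
        apply adj_le
        · exact le_trans (le_adj _ _) (le_trans (le_adj _ _) (le_adj _ _))
        · intro y hy
          have := hcover hy
          rcases this with h | h
          · exact subset_adj _ _ (by rw [h]; exact rfl)
          · exact le_adj _ _ (subset_adj _ _ h)
      have h2 := h1.mono hle
      apply algOver_adjoin_trans ?_ h2
      rintro y hy
      rcases hy with rfl
      have heq2 : adj F (insert (u (Fin.last p)) (Set.range t'))
          = adj (adj F {u (Fin.last p)}) (Set.range t') := by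
        rw [adj_adj, Set.insert_eq]
      rw [heq2] at halgz
      exact halgz
    have := ih hrest halg'
    omega
end Tuples

section Sigma
open MvPolynomial Set
open scoped Classical
variable {Ω : Type*} [Field Ω] {ι : Type*}

lemma range_sum_elim {κ₁ κ₂ : Type*} (f : κ₁ → Ω) (g : κ₂ → Ω) :
    Set.range (Sum.elim f g) = Set.range f ∪ Set.range g := by
  ext y
  constructor
  · rintro ⟨i, rfl⟩
    cases i with
    | inl i => exact Or.inl ⟨i, rfl⟩
    | inr j => exact Or.inr ⟨j, rfl⟩
  · rintro (⟨i, rfl⟩ | ⟨j, rfl⟩)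
    · exact ⟨Sum.inl i, rfl⟩
    · exact ⟨Sum.inr j, rfl⟩

lemma subfield_map_mono (σ : Ω →+* Ω) {K L : Subfield Ω} (h : K ≤ L) :
    K.map σ ≤ L.map σ := by
  rintro x ⟨y, hy, rfl⟩
  exact ⟨y, h hy, rfl⟩

lemma adj_map_le (σ : Ω →+* Ω) (F : Subfield Ω) (s : Set Ω) :
    (adj F s).map σ ≤ adj (F.map σ) (σ '' s) := by
  rw [Subfield.map_le_iff_le_comap]
  apply Subfield.closure_le.2
  rintro x (hx | hx)
  · exact le_adj _ _ ⟨x, hx, rfl⟩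
  · exact subset_adj _ _ ⟨x, hx, rfl⟩

lemma AlgOver.map {F : Subfield Ω} {x : Ω} (σ : Ω →+* Ω) (h : AlgOver F x) :
    AlgOver (F.map σ) (σ x) := by
  obtain ⟨p, hp0, hpc, hpe⟩ := h
  refine ⟨p.map σ, ?_, ?_, ?_⟩
  · intro hcon
    exact hp0 (Polynomial.map_injective σ σ.injective (by rw [hcon, Polynomial.map_zero]))
  · intro i
    rw [Polynomial.coeff_map]
    exact ⟨_, hpc i, rfl⟩
  · rw [Polynomial.eval_map, Polynomial.eval₂_hom, hpe, map_zero]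

lemma eval_map_sigma (σ : Ω →+* Ω) (t : ι → Ω) (q : MvPolynomial ι Ω) :
    MvPolynomial.eval (fun i => σ (t i)) (MvPolynomial.map (σ : Ω →+* Ω) q)
      = σ (MvPolynomial.eval t q) := by
  have h : (MvPolynomial.eval (fun i => σ (t i))).comp (MvPolynomial.map (σ : Ω →+* Ω))
      = (σ : Ω →+* Ω).comp (MvPolynomial.eval t) := by
    apply ringHom_ext
    · intro r
      simp
    · intro i
      simp
  exact DFunLike.congr_fun h q

lemma algIndepOver_map {F : Subfield Ω} {t : ι → Ω} (σ : Ω →+* Ω) (h : AlgIndepOver F t) :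
    AlgIndepOver (F.map σ) (fun i => σ (t i)) := by
  intro P hPc hPe
  have hex : ∀ m : ι →₀ ℕ, ∃ y, y ∈ F ∧ σ y = MvPolynomial.coeff m P := by
    intro m
    obtain ⟨y, hy, hyeq⟩ := Subfield.mem_map.1 (hPc m)
    exact ⟨y, hy, hyeq⟩
  choose pre hpreF hpreEq using hex
  set P' : MvPolynomial ι Ω := ∑ m ∈ P.support, monomial m (pre m) with hP'
  have hcoeffP' : ∀ μ, MvPolynomial.coeff μ P' = if μ ∈ P.support then pre μ else 0 := by
    intro μ
    rw [hP', MvPolynomial.coeff_sum]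
    have hterm : ∀ m ∈ P.support, MvPolynomial.coeff μ (monomial m (pre m))
        = if m = μ then pre m else 0 := fun m _ => coeff_monomial μ m (pre m)
    rw [Finset.sum_congr rfl hterm, Finset.sum_ite_eq' P.support μ (fun m => pre m)]
  have hmap : MvPolynomial.map (σ : Ω →+* Ω) P' = P := by
    apply MvPolynomial.ext
    intro μ
    rw [MvPolynomial.coeff_map, hcoeffP' μ]
    split_ifs with hμ
    · exact hpreEq μ
    · rw [map_zero, MvPolynomial.notMem_support_iff.1 hμ]
  have hP'c : ∀ μ, MvPolynomial.coeff μ P' ∈ F := by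
    intro μ
    rw [hcoeffP' μ]
    split_ifs
    · exact hpreF μ
    · exact F.zero_mem
  have hP'e : MvPolynomial.eval t P' = 0 := by
    apply σ.injective
    rw [map_zero, ← eval_map_sigma σ t P', hmap]
    exact hPe
  have hP'0 : P' = 0 := h P' hP'c hP'e
  rw [← hmap, hP'0, map_zero]

lemma iterate_mem {K : Subfield Ω} {σ : Ω →+* Ω} (hK : ∀ x ∈ K, σ x ∈ K) :
    ∀ (l : ℕ) (x : Ω), x ∈ K → (⇑σ)^[l] x ∈ K := by
  intro l
  induction l with
  | zero => intro x hx; exact hx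
  | succ l ih =>
    intro x hx
    rw [Function.iterate_succ_apply]
    exact ih _ (hK x hx)

lemma map_le_self {K : Subfield Ω} {σ : Ω →+* Ω} (hK : ∀ x ∈ K, σ x ∈ K) :
    K.map σ ≤ K := by
  rintro x ⟨y, hy, rfl⟩
  exact hK y hy

lemma algOver_shift {K : Subfield Ω} {σ : Ω →+* Ω} (hK : ∀ x ∈ K, σ x ∈ K)
    {s : Set Ω} {x : Ω} (h : AlgOver (adj K s) x) :
    AlgOver (adj K (σ '' s)) (σ x) := by
  have h1 := AlgOver.map σ h
  have h2 := h1.mono (adj_map_le σ K s)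
  exact h2.mono (adj_mono (map_le_self hK) le_rfl)

lemma mem_adj_finite {F : Subfield Ω} {T : Set Ω} {x : Ω} (hx : x ∈ adj F T) :
    ∃ T₀ : Finset Ω, ↑T₀ ⊆ T ∧ x ∈ adj F ↑T₀ := by
  induction hx using Subfield.closure_induction with
  | mem y hy =>
    rcases hy with hy | hy
    · exact ⟨∅, by simp, le_adj _ _ hy⟩
    · exact ⟨{y}, by simpa using hy, subset_adj _ _ (by simp)⟩
  | one => exact ⟨∅, by simp, Subfield.one_mem _⟩
  | add a b _ _ iha ihb =>
    obtain ⟨Ta, hTa, ha⟩ := iha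
    obtain ⟨Tb, hTb, hb⟩ := ihb
    refine ⟨Ta ∪ Tb, ?_, ?_⟩
    · rw [Finset.coe_union]
      exact Set.union_subset hTa hTb
    · apply Subfield.add_mem
      · exact adj_mono le_rfl (by rw [Finset.coe_union]; exact Set.subset_union_left) ha
      · exact adj_mono le_rfl (by rw [Finset.coe_union]; exact Set.subset_union_right) hb
  | neg a _ iha =>
    obtain ⟨Ta, hTa, ha⟩ := iha
    exact ⟨Ta, hTa, (adj F ↑Ta).neg_mem ha⟩
  | inv a _ iha =>
    obtain ⟨Ta, hTa, ha⟩ := iha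
    exact ⟨Ta, hTa, (adj F ↑Ta).inv_mem ha⟩
  | mul a b _ _ iha ihb =>
    obtain ⟨Ta, hTa, ha⟩ := iha
    obtain ⟨Tb, hTb, hb⟩ := ihb
    refine ⟨Ta ∪ Tb, ?_, ?_⟩
    · rw [Finset.coe_union]
      exact Set.union_subset hTa hTb
    · apply Subfield.mul_mem
      · exact adj_mono le_rfl (by rw [Finset.coe_union]; exact Set.subset_union_left) ha
      · exact adj_mono le_rfl (by rw [Finset.coe_union]; exact Set.subset_union_right) hb

lemma algIndepOver_adj_of_finite {F : Subfield Ω} {T : Set Ω} {t : ι → Ω}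
    (h : ∀ (r : ℕ) (a : Fin r → Ω), (∀ i, a i ∈ T) → AlgIndepOver (adj F (Set.range a)) t) :
    AlgIndepOver (adj F T) t := by
  intro P hPc hPe
  choose T0 hT0sub hT0mem using fun (m : P.support) => mem_adj_finite (hPc m.1)
  set S : Finset Ω := P.support.attach.biUnion (fun m => T0 m) with hS
  set a : Fin S.card → Ω := fun i => (S.equivFin.symm i : Ω) with ha
  have haT : ∀ i, a i ∈ T := by
    intro i
    have hmem : (S.equivFin.symm i : Ω) ∈ S := (S.equivFin.symm i).2
    obtain ⟨m, _, hm2⟩ := Finset.mem_biUnion.1 hmem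
    exact hT0sub m hm2
  have hrange : ↑S ⊆ Set.range a := by
    intro y hy
    exact ⟨S.equivFin ⟨y, hy⟩, by rw [ha]; simp⟩
  apply h S.card a haT P ?_ hPe
  intro m
  by_cases hm : m ∈ P.support
  · apply adj_mono le_rfl ?_ (hT0mem ⟨m, hm⟩)
    refine subset_trans ?_ hrange
    intro y hy
    exact Finset.mem_coe.2 (Finset.mem_biUnion.2 ⟨⟨m, hm⟩, Finset.mem_attach _ _, Finset.mem_coe.1 hy⟩)
  · rw [MvPolynomial.notMem_support_iff.1 hm]
    exact Subfield.zero_mem _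
end Sigma

section TA
open MvPolynomial Set
open scoped Classical
variable {Ω : Type*} [Field Ω]

lemma ta_exists {K : Subfield Ω} {σ : Ω →+* Ω} {a : Ω}
    (h : ¬ AlgIndepOver K (fun n : ℕ => (⇑σ)^[n] a)) :
    ∃ j : ℕ, AlgOver (adj K ((fun l => (⇑σ)^[l] a) '' {l | l < j})) ((⇑σ)^[j] a) := by
  rw [AlgIndepOver] at h
  push_neg at h
  obtain ⟨P, hPc, hPe, hP0⟩ := h
  obtain ⟨d, f, hfinj, Q, rfl⟩ := MvPolynomial.exists_fin_rename P
  have hQ0 : Q ≠ 0 := fun hq => hP0 (by rw [hq, map_zero])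
  have hQc : ∀ μ, MvPolynomial.coeff μ Q ∈ K := fun μ => by
    rw [← coeff_rename_mapDomain f hfinj Q μ]
    exact hPc _
  have hQe : MvPolynomial.eval ((fun n : ℕ => (⇑σ)^[n] a) ∘ f) Q = 0 := by
    rw [← eval_rename]
    exact hPe
  have hnind : ¬ AlgIndepOver K ((fun n : ℕ => (⇑σ)^[n] a) ∘ f) :=
    fun hind => hQ0 (hind Q hQc hQe)
  set N : ℕ := (Finset.univ.sup (fun i : Fin d => f i)) + 1 with hN
  set tN : Fin N → Ω := fun i => (⇑σ)^[(i : ℕ)] a with htN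
  set hh : Fin d → Fin N := fun i => ⟨f i, Nat.lt_succ_of_le (Finset.le_sup (Finset.mem_univ i))⟩
    with hhdef
  have hhinj : Function.Injective hh := by
    intro i j hij
    apply hfinj
    have := congrArg (fun x : Fin N => (x : ℕ)) hij
    exact this
  have hcompeq : tN ∘ hh = (fun n : ℕ => (⇑σ)^[n] a) ∘ f := rfl
  have hNind : ¬ AlgIndepOver K tN := by
    intro hind
    apply hnind
    rw [← hcompeq]
    exact algIndepOver_comp_inj hind hhinj
  obtain ⟨m, hm, halg⟩ := exists_algOver_of_not_indep hNind
  refine ⟨m, ?_⟩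
  have himg : tN '' {i : Fin N | (i : ℕ) < m} = (fun l => (⇑σ)^[l] a) '' {l | l < m} := by
    ext y
    constructor
    · rintro ⟨i, hi, rfl⟩
      exact ⟨(i : ℕ), hi, rfl⟩
    · rintro ⟨l, hl, rfl⟩
      exact ⟨⟨l, lt_trans hl hm⟩, hl, rfl⟩
  rw [himg] at halg
  exact halg

lemma ta_prefix {K : Subfield Ω} {σ : Ω →+* Ω} (hK : ∀ x ∈ K, σ x ∈ K) {a : Ω}
    (h : ¬ AlgIndepOver K (fun n : ℕ => (⇑σ)^[n] a)) :
    ∃ m : ℕ, 1 ≤ m ∧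
      ∀ l : ℕ, AlgOver (adj K ((fun i => (⇑σ)^[i] a) '' {i | i < m})) ((⇑σ)^[l] a) := by
  obtain ⟨j, hj⟩ := ta_exists h
  refine ⟨max j 1, le_max_right _ _, ?_⟩
  intro l
  induction l using Nat.strong_induction_on with
  | _ l ih =>
    by_cases hl : l < max j 1
    · exact algOver_of_mem (subset_adj _ _ ⟨l, hl, rfl⟩)
    · push_neg at hl
      have hjl : j ≤ l := le_trans (le_max_left j 1) hl
      have hshift : ∀ k : ℕ,
          AlgOver (adj K ((fun y => (⇑σ)^[k] y) '' ((fun i => (⇑σ)^[i] a) '' {i | i < j})))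
            ((⇑σ)^[k] ((⇑σ)^[j] a)) := by
        intro k
        induction k with
        | zero => simpa using hj
        | succ k ihk =>
          have hstep := algOver_shift hK ihk
          have himg : (⇑σ) '' ((fun y => (⇑σ)^[k] y) '' ((fun i => (⇑σ)^[i] a) '' {i | i < j}))
              = (fun y => (⇑σ)^[k+1] y) '' ((fun i => (⇑σ)^[i] a) '' {i | i < j}) := by
            rw [Set.image_image]
            apply Set.image_congr
            intro y _
            rw [Function.iterate_succ_apply']
          rw [himg] at hstep
          rw [Function.iterate_succ_apply']
          exact hstep
      have hone := hshift (l - j)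
      have hlj : l - j + j = l := Nat.sub_add_cancel hjl
      have helt : (⇑σ)^[l - j] ((⇑σ)^[j] a) = (⇑σ)^[l] a := by
        rw [← Function.iterate_add_apply, hlj]
      rw [helt] at hone
      apply algOver_adjoin_trans
        (G := adj K ((fun i => (⇑σ)^[i] a) '' {i | i < max j 1}))
        (s := (fun y => (⇑σ)^[l - j] y) '' ((fun i => (⇑σ)^[i] a) '' {i | i < j}))
      · rintro y ⟨z, ⟨i, hi, rfl⟩, rfl⟩
        have hbeta : (⇑σ)^[l - j] ((⇑σ)^[i] a) = (⇑σ)^[l - j + i] a := by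
          rw [← Function.iterate_add_apply]
        show AlgOver (adj K ((fun i => (⇑σ)^[i] a) '' {i | i < max j 1}))
          ((⇑σ)^[l - j] ((⇑σ)^[i] a))
        rw [hbeta]
        apply ih
        have hij : i < j := hi
        omega
      · apply hone.mono
        rw [adj_adj]
        exact adj_mono le_rfl Set.subset_union_right
end TA

section Main
open MvPolynomial Set
open scoped Classical
variable {Ω : Type*} [Field Ω]

lemma symm_lemma {σ : Ω →+* Ω} {K L : Subfield Ω}
    (hKσ : ∀ x ∈ K, σ x ∈ K) (hKL : K ≤ L)
    (H1 : ∀ (n : ℕ) (b : Fin n → Ω), (∀ i, b i ∈ K) →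
      AlgIndepOver (K.map σ) b → AlgIndepOver (L.map σ) b)
    {s : ℕ} {u : Fin s → Ω} (hu : ∀ i, u i ∈ L.map σ)
    (hind : AlgIndepOver (K.map σ) u) : AlgIndepOver K u := by
  have hKeq : adj (K.map σ) (↑K : Set Ω) = K :=
    le_antisymm (adj_le (map_le_self hKσ) le_rfl) (fun x hx => subset_adj _ _ hx)
  rw [← hKeq]
  apply algIndepOver_adj_of_finite
  intro r aK haK
  obtain ⟨k, v, hvsub, hvind, hvcov⟩ := exists_greedy_basis (F := K.map σ) (t := aK)
  have hvK : ∀ j, v j ∈ K := by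
    intro j
    obtain ⟨i, hi⟩ := hvsub j
    rw [hi]
    exact haK i
  have hvL : AlgIndepOver (L.map σ) v := H1 k v hvK hvind
  have hle1 : adj (K.map σ) (Set.range u) ≤ L.map σ := by
    apply adj_le (subfield_map_mono σ hKL)
    rintro y ⟨i, rfl⟩
    exact hu i
  have hv2 : AlgIndepOver (adj (K.map σ) (Set.range u)) v := algIndepOver_mono hvL hle1
  have h3 : AlgIndepOver (K.map σ) (Sum.elim u v) := algIndepOver_sum_iff.2 ⟨hind, hv2⟩
  have h4 := (algIndepOver_sum_iff.1 (algIndepOver_sum_comm_mp h3)).2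
  have h5 : AlgIndepOver (adj (adj (K.map σ) (Set.range v)) (Set.range aK)) u :=
    algIndepOver_adj_algebraic h4 (by rintro y ⟨i, rfl⟩; exact hvcov i)
  apply algIndepOver_mono h5
  rw [adj_adj]
  exact adj_mono le_rfl Set.subset_union_right

lemma hard_direction {σ : Ω →+* Ω} {K M L : Subfield Ω}
    (hKσ : ∀ x ∈ K, σ x ∈ K) (hMσ : ∀ x ∈ M, σ x ∈ M)
    (hKM : K ≤ M) (hML : M ≤ L)
    (hta : ∀ a ∈ M, ¬ AlgIndepOver K (fun n : ℕ => (⇑σ)^[n] a))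
    (H1 : ∀ (n : ℕ) (b : Fin n → Ω), (∀ i, b i ∈ K) →
      AlgIndepOver (K.map σ) b → AlgIndepOver (L.map σ) b)
    {n : ℕ} {b : Fin n → Ω} (hbM : ∀ i, b i ∈ M)
    (hb : AlgIndepOver (M.map σ) b) : AlgIndepOver (L.map σ) b := by
  have hfin : adj (K.map σ) (↑(L.map σ) : Set Ω) = L.map σ :=
    le_antisymm (adj_le (subfield_map_mono σ (le_trans hKM hML)) le_rfl)
      (fun x hx => subset_adj _ _ hx)
  rw [← hfin]
  apply algIndepOver_adj_of_finite
  intro s w hw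
  -- Step 0 : transformal algebraicity data
  have hta' : ∀ i : Fin n, ∃ m : ℕ, 1 ≤ m ∧ ∀ l : ℕ,
      AlgOver (adj K ((fun t => (⇑σ)^[t] (b i)) '' {t | t < m})) ((⇑σ)^[l] (b i)) :=
    fun i => ta_prefix hKσ (hta (b i) (hbM i))
  choose mfun hm1 hmprop using hta'
  set m : ℕ := (Finset.univ.sup mfun) + 1 with hmdef
  have hmge : ∀ i, mfun i ≤ m := fun i =>
    le_trans (Finset.le_sup (Finset.mem_univ i)) (Nat.le_succ _)
  set β : Fin n × Fin m → Ω := fun p => (⇑σ)^[(p.2 : ℕ) + 1] (b p.1) with hβ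
  have hβM : ∀ p, β p ∈ M.map σ := by
    intro p
    refine ⟨(⇑σ)^[(p.2 : ℕ)] (b p.1), iterate_mem hMσ _ _ (hbM p.1), ?_⟩
    rw [hβ]
    exact (Function.iterate_succ_apply' σ _ _).symm
  have hβL : ∀ p, β p ∈ L.map σ := fun p => subfield_map_mono σ hML (hβM p)
  -- all iterates with l ≥ 1 are algebraic over adj σK (range β)
  have hB1 : ∀ (i : Fin n) (l : ℕ), 1 ≤ l →
      AlgOver (adj (K.map σ) (Set.range β)) ((⇑σ)^[l] (b i)) := by
    intro i l hl
    obtain ⟨l', rfl⟩ : ∃ l', l = l' + 1 := ⟨l - 1, by omega⟩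
    have h1 := AlgOver.map σ (hmprop i l')
    have h2 := h1.mono (adj_map_le σ K _)
    have hle : adj (K.map σ) (⇑σ '' ((fun t => (⇑σ)^[t] (b i)) '' {t | t < mfun i}))
        ≤ adj (K.map σ) (Set.range β) := by
      apply adj_mono le_rfl
      rintro y ⟨z, ⟨t, ht, rfl⟩, rfl⟩
      refine ⟨(i, ⟨t, lt_of_lt_of_le ht (hmge i)⟩), ?_⟩
      rw [hβ]
      exact Function.iterate_succ_apply' σ t (b i)
    rw [Function.iterate_succ_apply']
    exact (h2.mono hle)
  -- reindex β to a Fin tuple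
  set eβ : (Fin n × Fin m) ≃ Fin (Fintype.card (Fin n × Fin m)) := Fintype.equivFin _ with heβ
  set βe : Fin (Fintype.card (Fin n × Fin m)) → Ω := β ∘ eβ.symm with hβe
  obtain ⟨c₁, vβ, hvβsub, hvβind, hvβcov⟩ := exists_greedy_basis (F := K.map σ) (t := βe)
  obtain ⟨c₂, vw, hvwsub, hvwind, hvwcov⟩ :=
    exists_greedy_basis (F := adj (K.map σ) (Set.range vβ)) (t := w)
  have hvβmemM : ∀ j, vβ j ∈ M.map σ := by
    intro j
    obtain ⟨i, hi⟩ := hvβsub j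
    rw [hi]
    exact hβM (eβ.symm i)
  have hvβmemL : ∀ j, vβ j ∈ L.map σ := fun j => subfield_map_mono σ hML (hvβmemM j)
  have hvwmemL : ∀ j, vw j ∈ L.map σ := by
    intro j
    obtain ⟨i, hi⟩ := hvwsub j
    rw [hi]
    exact hw i
  have hB1' : ∀ (i : Fin n) (l : ℕ), 1 ≤ l →
      AlgOver (adj (K.map σ) (Set.range vβ)) ((⇑σ)^[l] (b i)) := by
    intro i l hl
    apply algOver_adjoin_trans (G := adj (K.map σ) (Set.range vβ)) (s := Set.range β)
    · rintro y ⟨p, rfl⟩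
      have h := hvβcov (eβ p)
      have hval : βe (eβ p) = β p := by rw [hβe]; simp
      rwa [hval] at h
    · exact (hB1 i l hl).mono (adj_mono (le_adj _ _) le_rfl)
  -- Step 2 : b indep over adj σK (range vβ)
  have hstep2 : AlgIndepOver (adj (K.map σ) (Set.range vβ)) b := by
    apply algIndepOver_mono hb
    apply adj_le (subfield_map_mono σ hKM)
    rintro y ⟨j, rfl⟩
    exact hvβmemM j
  -- vβ indep over K (symmetry)
  have hvβK : AlgIndepOver K vβ := symm_lemma hKσ (le_trans hKM hML) H1 hvβmemL hvβind
  -- Step C : b i algebraic over adj K (range vβ)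
  have hstepC : ∀ i, AlgOver (adj K (Set.range vβ)) (b i) := by
    intro i₀
    by_contra hcon
    have hsnoc : AlgIndepOver K (Fin.snoc vβ (b i₀) : Fin (c₁+1) → Ω) :=
      algIndepOver_snoc_iff.2 ⟨hvβK, hcon⟩
    have hmapped := algIndepOver_map σ hsnoc
    have halgcomp : ∀ j : Fin (c₁+1), AlgOver (adj (K.map σ) (Set.range vβ))
        (σ ((Fin.snoc vβ (b i₀) : Fin (c₁+1) → Ω) j)) := by
      intro j
      cases j using Fin.lastCases with
      | last =>
        rw [Fin.snoc_last]
        have h := hB1' i₀ 1 le_rfl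
        simpa using h
      | cast j =>
        rw [Fin.snoc_castSucc]
        obtain ⟨i, hi⟩ := hvβsub j
        rw [hi]
        have hval : βe i = β (eβ.symm i) := rfl
        rw [hval, hβ]
        show AlgOver (adj (K.map σ) (Set.range vβ))
          (σ ((⇑σ)^[((eβ.symm i).2 : ℕ) + 1] (b (eβ.symm i).1)))
        rw [← Function.iterate_succ_apply' σ (((eβ.symm i).2 : ℕ) + 1)]
        exact hB1' (eβ.symm i).1 _ (by omega)
    have hexch := exchange hmapped halgcomp
    omega
  -- vw indep over adj K (range vβ) via symmetry on the combined tuple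
  have hsumK : AlgIndepOver K (Sum.elim vβ vw) := by
    set eSum : (Fin c₁ ⊕ Fin c₂) ≃ Fin (c₁ + c₂) := finSumFinEquiv with heSum
    set uu : Fin (c₁ + c₂) → Ω := (Sum.elim vβ vw) ∘ eSum.symm with huu
    have huuL : ∀ i, uu i ∈ L.map σ := by
      intro i
      have hval : uu i = Sum.elim vβ vw (eSum.symm i) := rfl
      rw [hval]
      cases h : eSum.symm i with
      | inl j => exact hvβmemL j
      | inr j => exact hvwmemL j
    have huuind : AlgIndepOver (K.map σ) uu :=
      algIndepOver_comp_inj (algIndepOver_sum_iff.2 ⟨hvβind, hvwind⟩) eSum.symm.injective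
    have huuK : AlgIndepOver K uu := symm_lemma hKσ (le_trans hKM hML) H1 huuL huuind
    have h2 := algIndepOver_comp_inj huuK eSum.injective
    have hcomp : uu ∘ eSum = Sum.elim vβ vw := by
      funext i
      rw [huu]
      simp
    rwa [hcomp] at h2
  have hvwK : AlgIndepOver (adj K (Set.range vβ)) vw := (algIndepOver_sum_iff.1 hsumK).2
  have hvwKb : AlgIndepOver (adj (adj K (Set.range vβ)) (Set.range b)) vw :=
    algIndepOver_adj_algebraic hvwK (by rintro y ⟨i, rfl⟩; exact hstepC i)
  have hvw_over : AlgIndepOver (adj (K.map σ) (Set.range vβ ∪ Set.range b)) vw := by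
    apply algIndepOver_mono hvwKb
    rw [adj_adj]
    exact adj_mono (map_le_self hKσ) le_rfl
  -- assemble ((vβ ⊕ b) ⊕ vw) indep over σK
  have houter : AlgIndepOver (K.map σ) (Sum.elim (Sum.elim vβ b) vw) := by
    apply algIndepOver_sum_iff.2
    refine ⟨algIndepOver_sum_iff.2 ⟨hvβind, hstep2⟩, ?_⟩
    rw [range_sum_elim]
    exact hvw_over
  -- permute to ((vβ ⊕ vw) ⊕ b)
  have hperm : AlgIndepOver (K.map σ) (Sum.elim (Sum.elim vβ vw) b) := by
    set eperm : ((Fin c₁ ⊕ Fin c₂) ⊕ Fin n) ≃ ((Fin c₁ ⊕ Fin n) ⊕ Fin c₂) :=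
      (Equiv.sumAssoc (Fin c₁) (Fin c₂) (Fin n)).trans
        (((Equiv.refl (Fin c₁)).sumCongr (Equiv.sumComm (Fin c₂) (Fin n))).trans
          (Equiv.sumAssoc (Fin c₁) (Fin n) (Fin c₂)).symm) with heperm
    have hcompeq : (Sum.elim (Sum.elim vβ b) vw) ∘ eperm = Sum.elim (Sum.elim vβ vw) b := by
      funext i
      rcases i with (j | j) | j <;> rfl
    have h2 := algIndepOver_comp_inj houter eperm.injective
    rwa [hcompeq] at h2
  have hbfinal : AlgIndepOver (adj (K.map σ) (Set.range (Sum.elim vβ vw))) b :=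
    (algIndepOver_sum_iff.1 hperm).2
  have hwcov' : ∀ y ∈ Set.range w, AlgOver (adj (K.map σ) (Set.range (Sum.elim vβ vw))) y := by
    rintro y ⟨i, rfl⟩
    have h := hvwcov i
    rw [adj_adj] at h
    rw [range_sum_elim]
    exact h
  have hfinal2 : AlgIndepOver (adj (adj (K.map σ) (Set.range (Sum.elim vβ vw))) (Set.range w)) b :=
    algIndepOver_adj_algebraic hbfinal hwcov'
  apply algIndepOver_mono hfinal2
  rw [adj_adj]
  exact adj_mono le_rfl Set.subset_union_right
end Main

end S11

/-- Subfields `B` and `C` of `Ω` are algebraically disjoint over `A`. -/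
def AlgDisjOver {Ω : Type*} [Field Ω] (A B C : Subfield Ω) : Prop :=
  ∀ (n : ℕ) (b : Fin n → Ω), (∀ i, b i ∈ B) → AlgIndepOver A b → AlgIndepOver C b

/-- `L/K` is almost transformally separable: `K` and `σ(L)` are algebraically disjoint
over `σ(K)`. -/
def AlmostTransSepOver {Ω : Type*} [Field Ω] (σ : Ω →+* Ω) (K L : Subfield Ω) : Prop :=
  AlgDisjOver (K.map σ) K (L.map σ)

/-- `a` is transformally algebraic over the subfield `K` of `(Ω, σ)`. -/
def TransAlgElemOver {Ω : Type*} [Field Ω] (σ : Ω →+* Ω) (K : Subfield Ω) (a : Ω) : Prop :=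
  ¬ AlgIndepOver K (fun n : ℕ => (⇑σ)^[n] a)

theorem statement11 {Ω : Type*} [Field Ω] (σ : Ω →+* Ω)
    (K M L : Subfield Ω)
    (hKσ : ∀ x ∈ K, σ x ∈ K) (hMσ : ∀ x ∈ M, σ x ∈ M) (hLσ : ∀ x ∈ L, σ x ∈ L)
    (hKM : K ≤ M) (hML : M ≤ L)
    -- M is transformally algebraic over K
    (hta : ∀ a ∈ M, TransAlgElemOver σ K a) :
    AlmostTransSepOver σ K L ↔
      (AlmostTransSepOver σ K M ∧ AlmostTransSepOver σ M L) := by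
  constructor
  · intro hS
    constructor
    · intro n b hbK hbind
      exact S11.algIndepOver_mono (hS n b hbK hbind) (S11.subfield_map_mono σ hML)
    · intro n b hbM hbind
      exact S11.hard_direction hKσ hMσ hKM hML (fun a ha => hta a ha) hS hbM hbind
  · rintro ⟨h1, h2⟩
    intro n b hbK hbind
    exact h2 n b (fun i => hKM (hbK i)) (h1 n b hbK hbind)
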